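/- Let N > 1 be an odd integer, let b be a real constant with |b| < 2, let c = 1, and set θ = arccos(−b/2). Suppose Nθ = 2πρ for some positive integer ρ. Let g : ℕ × ℝ → ℝ be continuous in its second variable and N-periodic in its first variable, and suppose: (C1) there exists K > 0 with |g(t,x)| ≤ K for all t ∈ ℕ and x ∈ ℝ; (C2) there exist constants ẑ and J > 0 such that for every real x with x ≥ ẑ and every t ∈ ℕ, g(t,−x) ≤ −J < 0 < J ≤ g(t,x); (C3) N/gcd(ρ,N) ≥ max{3, K/J + 1}. Then there exists an N-periodic function y : ℕ → ℝ (y(t+N) = y(t) for all t) satisfying y(t+2) + b·y(t+1) + y(t) = g(t, y(t)) for all t ∈ ℕ. -/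

import Mathlib

open Complex Set

noncomputable section

/-- A "lift" of `γ` on `[0,1]`: continuous `L` with `exp (L x) = γ x`. -/
def IsLift (γ L : ℝ → ℂ) : Prop :=
  ContinuousOn L (Icc 0 1) ∧ ∀ x ∈ Icc (0:ℝ) 1, Complex.exp (L x) = γ x

lemma slitPlane_of_norm_lt {z : ℂ} (h : ‖z - 1‖ < 1) : z ∈ slitPlane := by
  rw [mem_slitPlane_iff]
  left
  have h1 := Complex.abs_re_le_norm (z - 1)
  simp only [sub_re, one_re] at h1
  rcases abs_lt.mp (lt_of_le_of_lt h1 h) with ⟨h2, h3⟩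
  linarith

/-- endpoint differences of lifts agree -/
lemma lift_unique {γ L₁ L₂ : ℝ → ℂ} (h₁ : IsLift γ L₁) (h₂ : IsLift γ L₂) :
    L₁ 1 - L₁ 0 = L₂ 1 - L₂ 0 := by
  have key : ∀ x ∈ Icc (0:ℝ) 1, ∃ n : ℤ, L₁ x - L₂ x = n * (2 * Real.pi * I) := by
    intro x hx
    rw [← Complex.exp_eq_one_iff, Complex.exp_sub, h₁.2 x hx, h₂.2 x hx, div_self]
    rw [← h₁.2 x hx]; exact Complex.exp_ne_zero _
  have h0 : (0:ℝ) ∈ Icc (0:ℝ) 1 := by norm_num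
  have h1 : (1:ℝ) ∈ Icc (0:ℝ) 1 := by norm_num
  obtain ⟨n₀, hn₀⟩ := key 0 h0
  obtain ⟨n₁, hn₁⟩ := key 1 h1
  -- show n₀ = n₁ via IVT on imaginary part
  have him : n₀ = n₁ := by
    by_contra hne
    set u : ℝ → ℝ := fun x => (L₁ x - L₂ x).im with hu
    have hucont : ContinuousOn u (Icc 0 1) :=
      Complex.continuous_im.comp_continuousOn (h₁.1.sub h₂.1)
    have hval : ∀ x ∈ Icc (0:ℝ) 1, ∃ n : ℤ, u x = n * (2 * Real.pi) := by
      intro x hx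
      obtain ⟨n, hn⟩ := key x hx
      exact ⟨n, by rw [hu]; simp [hn, Complex.mul_im]; try ring⟩
    have hu0 : u 0 = n₀ * (2 * Real.pi) := by rw [hu]; simp [hn₀, Complex.mul_im]; try ring
    have hu1 : u 1 = n₁ * (2 * Real.pi) := by rw [hu]; simp [hn₁, Complex.mul_im]; try ring
    have hpi := Real.pi_pos
    rcases lt_or_gt_of_ne hne with hlt | hlt
    · have hc : u 0 + Real.pi ∈ Icc (u 0) (u 1) := by
        constructor
        · linarith
        · rw [hu0, hu1]
          have : (n₀ : ℝ) + 1 ≤ n₁ := by exact_mod_cast hlt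
          nlinarith
      obtain ⟨x, hx, hxval⟩ := intermediate_value_Icc (by norm_num : (0:ℝ) ≤ 1) hucont hc
      obtain ⟨n, hn⟩ := hval x hx
      rw [hn, hu0] at hxval
      have : (2 * (n - n₀) : ℤ) * Real.pi = Real.pi := by push_cast; nlinarith
      have h2 : ((2 * (n - n₀) : ℤ) : ℝ) = 1 := by
        field_simp at this; exact_mod_cast this
      have : (2 * (n - n₀) : ℤ) = 1 := by exact_mod_cast h2
      omega
    · have hc : u 1 + Real.pi ∈ Icc (u 1) (u 0) := by
        constructor
        · linarith
        · rw [hu0, hu1]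
          have : (n₁ : ℝ) + 1 ≤ n₀ := by exact_mod_cast hlt
          nlinarith
      obtain ⟨x, hx, hxval⟩ := intermediate_value_Icc' (by norm_num : (0:ℝ) ≤ 1) hucont hc
      obtain ⟨n, hn⟩ := hval x hx
      rw [hn, hu1] at hxval
      have : (2 * (n - n₁) : ℤ) * Real.pi = Real.pi := by push_cast; nlinarith
      have h2 : ((2 * (n - n₁) : ℤ) : ℝ) = 1 := by
        field_simp at this; exact_mod_cast this
      have : (2 * (n - n₁) : ℤ) = 1 := by exact_mod_cast h2
      omega
  have : L₁ 1 - L₂ 1 = L₁ 0 - L₂ 0 := by rw [hn₁, hn₀, him]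
  linear_combination this

open scoped Classical in
/-- winding "number" (times 2πi) of a loop, via a choice of lift. -/
def wind (γ : ℝ → ℂ) : ℂ :=
  if h : ∃ L, IsLift γ L then h.choose 1 - h.choose 0 else 0

lemma wind_eq {γ L : ℝ → ℂ} (hL : IsLift γ L) : wind γ = L 1 - L 0 := by
  rw [wind]
  rw [dif_pos ⟨L, hL⟩]
  exact lift_unique (Exists.choose_spec (⟨L, hL⟩ : ∃ L, IsLift γ L)) hL

/-- Existence of lifts. -/
lemma exists_lift {γ : ℝ → ℂ} (hγ : Continuous γ) (hnz : ∀ x ∈ Icc (0:ℝ) 1, γ x ≠ 0) :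
    ∃ L, IsLift γ L := by
  -- minimum of ‖γ‖ on [0,1]
  obtain ⟨x₀, hx₀, hmin⟩ := isCompact_Icc.exists_isMinOn (⟨0, by norm_num⟩ : (Icc (0:ℝ) 1).Nonempty)
    (hγ.norm.continuousOn)
  set m : ℝ := ‖γ x₀‖ with hm
  have hmpos : 0 < m := norm_pos_iff.mpr (hnz x₀ hx₀)
  have hmle : ∀ x ∈ Icc (0:ℝ) 1, m ≤ ‖γ x‖ := fun x hx => hmin hx
  -- uniform continuity
  have huc : UniformContinuousOn γ (Icc 0 1) :=
    isCompact_Icc.uniformContinuousOn_of_continuous hγ.continuousOn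
  rw [Metric.uniformContinuousOn_iff] at huc
  obtain ⟨δ, hδ, hucδ⟩ := huc m hmpos
  obtain ⟨n, hn⟩ := exists_nat_gt (1 / δ)
  have hnpos : 0 < (n:ℝ) := lt_trans (by positivity) hn
  have hinv : 1 / (n:ℝ) < δ := by
    rw [div_lt_iff₀ hnpos]
    rw [div_lt_iff₀ hδ] at hn
    nlinarith
  -- induction
  suffices h : ∀ k : ℕ, k ≤ n → ∃ L : ℝ → ℂ, Continuous L ∧
      ∀ x ∈ Icc (0:ℝ) ((k:ℝ)/n), Complex.exp (L x) = γ x by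
    obtain ⟨L, hLc, hLe⟩ := h n le_rfl
    refine ⟨L, hLc.continuousOn, ?_⟩
    rwa [div_self (ne_of_gt hnpos)] at hLe
  intro k
  induction k with
  | zero =>
    intro _
    refine ⟨fun _ => Complex.log (γ 0), continuous_const, ?_⟩
    intro x hx
    have hx' : x ∈ Icc (0:ℝ) 0 := by simpa using hx
    have : x = 0 := le_antisymm hx'.2 hx'.1
    rw [this, Complex.exp_log (hnz 0 (by norm_num))]
  | succ k ih =>
    intro hk1
    obtain ⟨L, hLc, hLe⟩ := ih (le_of_lt (Nat.lt_of_succ_le hk1))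
    set a : ℝ := (k:ℝ)/n with ha
    set a' : ℝ := ((k:ℝ)+1)/n with ha'
    have hanneg : 0 ≤ a := by positivity
    have haa' : a ≤ a' := by
      rw [ha, ha']
      exact (div_le_div_iff_of_pos_right hnpos).mpr (by linarith)
    have ha'le : a' ≤ 1 := by
      rw [div_le_one hnpos]
      have : ((k:ℝ) + 1) ≤ n := by exact_mod_cast hk1
      linarith
    have hale : a ≤ 1 := le_trans haa' ha'le
    set c₁ : ℝ → ℝ := fun x => max 0 (min x a) with hc₁
    set c₂ : ℝ → ℝ := fun x => max 0 (min x a') with hc₂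
    have hc₁mem : ∀ x, c₁ x ∈ Icc (0:ℝ) 1 :=
      fun x => ⟨le_max_left _ _, max_le (by linarith) (le_trans (min_le_right _ _) hale)⟩
    have hc₂mem : ∀ x, c₂ x ∈ Icc (0:ℝ) 1 :=
      fun x => ⟨le_max_left _ _, max_le (by linarith) (le_trans (min_le_right _ _) ha'le)⟩
    have hc₁mem' : ∀ x, c₁ x ∈ Icc (0:ℝ) a :=
      fun x => ⟨le_max_left _ _, max_le hanneg (min_le_right _ _)⟩
    have hdist : ∀ x, dist (c₂ x) (c₁ x) ≤ 1/n := by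
      intro x
      rw [Real.dist_eq, abs_le]
      rcases le_total x a with hxa | hxa
      · have : min x a = x := min_eq_left hxa
        have h2 : min x a' = x := min_eq_left (le_trans hxa haa')
        rw [hc₁, hc₂]; simp only [this, h2]
        have hp : (0:ℝ) ≤ 1/n := by positivity
        rw [sub_self]
        constructor <;> linarith
      · have h1 : c₁ x = a := by
          rw [hc₁]; simp only [min_eq_right hxa]; exact max_eq_right hanneg
        have h2 : a ≤ c₂ x := by
          rw [hc₂]
          exact le_max_of_le_right (le_min hxa haa')
        have h3 : c₂ x ≤ a' := by
          rw [hc₂]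
          exact max_le (by linarith) (min_le_right _ _)
        have haa : a' - a = 1/n := by rw [ha, ha']; ring
        constructor <;> [linarith; linarith]
    have hratio : ∀ x, ‖γ (c₂ x) / γ (c₁ x) - 1‖ < 1 := by
      intro x
      have hne : γ (c₁ x) ≠ 0 := hnz _ (hc₁mem x)
      rw [div_sub_one hne, norm_div, div_lt_one (norm_pos_iff.mpr hne)]
      calc ‖γ (c₂ x) - γ (c₁ x)‖ < m := by
            have := hucδ (c₂ x) (hc₂mem x) (c₁ x) (hc₁mem x)
              (lt_of_le_of_lt (hdist x) hinv)
            rwa [dist_eq_norm] at this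
        _ ≤ ‖γ (c₁ x)‖ := hmle _ (hc₁mem x)
    have hqne : ∀ x, γ (c₂ x) / γ (c₁ x) ≠ 0 :=
      fun x => div_ne_zero (hnz _ (hc₂mem x)) (hnz _ (hc₁mem x))
    have hc₁cont : Continuous c₁ := continuous_const.max (continuous_id.min continuous_const)
    have hc₂cont : Continuous c₂ := continuous_const.max (continuous_id.min continuous_const)
    refine ⟨fun x => L (c₁ x) + Complex.log (γ (c₂ x) / γ (c₁ x)), ?_, ?_⟩
    · apply (hLc.comp hc₁cont).add
      apply continuous_iff_continuousAt.mpr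
      intro x
      apply ContinuousAt.clog
      · exact ((hγ.comp hc₂cont).continuousAt).div ((hγ.comp hc₁cont).continuousAt)
          (hnz _ (hc₁mem x))
      · exact slitPlane_of_norm_lt (hratio x)
    · intro x hx
      rw [Complex.exp_add, Complex.exp_log (hqne x), hLe _ (hc₁mem' x)]
      have hx2 : x ≤ a' := by
        rw [ha']
        push_cast at hx
        exact hx.2
      have hc₂x : c₂ x = x := by
        rw [hc₂]
        show 0 ⊔ x ⊓ a' = x
        rw [min_eq_left hx2, max_eq_right hx.1]
      rw [hc₂x]
      field_simp [hnz _ (hc₁mem x)]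


lemma wind_perturb {γ₀ γ₁ : ℝ → ℂ} (h₀ : Continuous γ₀) (h₁ : Continuous γ₁)
    (hnz : ∀ x ∈ Icc (0:ℝ) 1, γ₀ x ≠ 0)
    (hlt : ∀ x ∈ Icc (0:ℝ) 1, ‖γ₁ x - γ₀ x‖ < ‖γ₀ x‖)
    (hl₀ : γ₀ 1 = γ₀ 0) (hl₁ : γ₁ 1 = γ₁ 0) : wind γ₁ = wind γ₀ := by
  obtain ⟨L, hL⟩ := exists_lift h₀ hnz
  have hnz1 : ∀ x ∈ Icc (0:ℝ) 1, γ₁ x ≠ 0 := by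
    intro x hx h
    have := hlt x hx
    rw [h, zero_sub, norm_neg] at this
    exact lt_irrefl _ this
  have hrne : ∀ x ∈ Icc (0:ℝ) 1, γ₁ x / γ₀ x ≠ 0 :=
    fun x hx => div_ne_zero (hnz1 x hx) (hnz x hx)
  have hslit : ∀ x ∈ Icc (0:ℝ) 1, γ₁ x / γ₀ x ∈ slitPlane := by
    intro x hx
    apply slitPlane_of_norm_lt
    rw [div_sub_one (hnz x hx), norm_div, div_lt_one (norm_pos_iff.mpr (hnz x hx))]
    exact hlt x hx
  set L' : ℝ → ℂ := fun x => L x + Complex.log (γ₁ x / γ₀ x) with hL'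
  have hlift : IsLift γ₁ L' := by
    constructor
    · apply hL.1.add
      apply ContinuousOn.clog
      · exact h₁.continuousOn.div h₀.continuousOn hnz
      · exact hslit
    · intro x hx
      rw [hL']
      show Complex.exp (L x + Complex.log (γ₁ x / γ₀ x)) = γ₁ x
      rw [Complex.exp_add, Complex.exp_log (hrne x hx), hL.2 x hx]
      field_simp [hnz x hx]
  rw [wind_eq hlift, wind_eq hL, hL']
  show L 1 + Complex.log (γ₁ 1 / γ₀ 1) - (L 0 + Complex.log (γ₁ 0 / γ₀ 0)) = _
  rw [hl₀, hl₁]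
  ring

lemma wind_homotopy {H : ℝ → ℝ → ℂ} (hH : Continuous fun p : ℝ × ℝ => H p.1 p.2)
    (hnz : ∀ s ∈ Icc (0:ℝ) 1, ∀ x ∈ Icc (0:ℝ) 1, H s x ≠ 0)
    (hloop : ∀ s ∈ Icc (0:ℝ) 1, H s 1 = H s 0) :
    wind (H 1) = wind (H 0) := by
  set Q : Set (ℝ × ℝ) := Icc 0 1 ×ˢ Icc 0 1 with hQ
  have hQc : IsCompact Q := isCompact_Icc.prod isCompact_Icc
  have hQne : Q.Nonempty := ⟨(0,0), by constructor <;> norm_num⟩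
  obtain ⟨p₀, hp₀, hmin⟩ := hQc.exists_isMinOn hQne (hH.norm.continuousOn)
  set m : ℝ := ‖H p₀.1 p₀.2‖ with hm
  have hmpos : 0 < m := norm_pos_iff.mpr (hnz p₀.1 hp₀.1 p₀.2 hp₀.2)
  have hmle : ∀ p ∈ Q, m ≤ ‖H p.1 p.2‖ := fun p hp => hmin hp
  have huc : UniformContinuousOn (fun p : ℝ × ℝ => H p.1 p.2) Q :=
    hQc.uniformContinuousOn_of_continuous hH.continuousOn
  rw [Metric.uniformContinuousOn_iff] at huc
  obtain ⟨δ, hδ, hucδ⟩ := huc m hmpos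
  obtain ⟨n, hn⟩ := exists_nat_gt (1 / δ)
  have hnpos : 0 < (n:ℝ) := lt_trans (by positivity) hn
  have hinv : 1 / (n:ℝ) < δ := by
    rw [div_lt_iff₀ hnpos]
    rw [div_lt_iff₀ hδ] at hn
    nlinarith
  have hcont : ∀ s : ℝ, Continuous (H s) := by
    intro s
    exact hH.comp (Continuous.prodMk_right s)
  have key : ∀ k : ℕ, k ≤ n → wind (H ((k:ℝ)/n)) = wind (H 0) := by
    intro k
    induction k with
    | zero => intro _; norm_num
    | succ k ih =>
      intro hk1
      have hks : (k:ℝ)/n ∈ Icc (0:ℝ) 1 := by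
        constructor
        · positivity
        · rw [div_le_one hnpos]
          have : (k:ℝ) ≤ n := by exact_mod_cast le_of_lt (Nat.lt_of_succ_le hk1)
          linarith
      have hk1s : ((k:ℝ)+1)/n ∈ Icc (0:ℝ) 1 := by
        constructor
        · positivity
        · rw [div_le_one hnpos]
          have : ((k:ℝ)+1) ≤ n := by exact_mod_cast hk1
          linarith
      rw [← ih (le_of_lt (Nat.lt_of_succ_le hk1))]
      push_cast
      apply wind_perturb (hcont _) (hcont _) (fun x hx => hnz _ hks x hx)
      · intro x hx
        have hd : dist ((((k:ℝ)+1)/n, x) : ℝ × ℝ) (((k:ℝ)/n, x) : ℝ × ℝ) < δ := by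
          rw [Prod.dist_eq]
          have h1 : dist (((k:ℝ)+1)/n) ((k:ℝ)/n) = 1/n := by
            rw [Real.dist_eq]
            have h2 : ((k:ℝ)+1)/n - (k:ℝ)/n = 1/n := by ring
            rw [h2]; exact abs_of_nonneg (by positivity)
          simp only [dist_self, h1]
          rw [max_eq_left (by positivity)]
          exact hinv
        have := hucδ _ ⟨hk1s, hx⟩ _ ⟨hks, hx⟩ hd
        rw [dist_eq_norm] at this
        exact lt_of_lt_of_le this (hmle ((k:ℝ)/n, x) ⟨hks, hx⟩)
      · exact hloop _ hks
      · exact hloop _ hk1s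
  have := key n le_rfl
  rwa [div_self (ne_of_gt hnpos)] at this

lemma wind_const {a : ℂ} (ha : a ≠ 0) : wind (fun _ => a) = 0 := by
  have : IsLift (fun _ => a) (fun _ => Complex.log a) :=
    ⟨continuousOn_const, fun x _ => Complex.exp_log ha⟩
  rw [wind_eq this, sub_self]

lemma wind_circle {a : ℂ} (ha : a ≠ 0) :
    wind (fun x : ℝ => a * Complex.exp ((2*Real.pi*x : ℝ) * Complex.I)) =
      2 * Real.pi * Complex.I := by
  have hlift : IsLift (fun x : ℝ => a * Complex.exp ((2*Real.pi*x : ℝ) * Complex.I))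
      (fun x : ℝ => Complex.log a + (2*Real.pi*x : ℝ) * Complex.I) := by
    constructor
    · apply continuousOn_const.add
      apply ContinuousOn.mul ?_ continuousOn_const
      exact (Complex.continuous_ofReal.comp (by continuity)).continuousOn
    · intro x _
      rw [Complex.exp_add, Complex.exp_log ha]
  rw [wind_eq hlift]
  push_cast
  ring

lemma exists_zero {T : ℂ → ℂ} (hT : Continuous T) {e : ℂ} (he : e ≠ 0) {R : ℝ} (hR : 0 < R)
    (hP : ∀ v : ℂ, ‖v‖ = R → 0 < (e * (starRingEnd ℂ) v * T v).re) :
    ∃ v : ℂ, ‖v‖ ≤ R ∧ T v = 0 := by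
  by_contra hcon
  push_neg at hcon
  set V : ℝ → ℂ := fun x => (R:ℂ) * Complex.exp ((2*Real.pi*x : ℝ) * Complex.I) with hV
  have hVabs : ∀ x, ‖V x‖ = R := by
    intro x
    have h1 : ‖Complex.exp ((2*Real.pi*x : ℝ) * Complex.I)‖ = 1 :=
      Complex.norm_exp_ofReal_mul_I _
    rw [hV]
    show ‖(R:ℂ) * Complex.exp ((2*Real.pi*x : ℝ) * Complex.I)‖ = R
    rw [norm_mul, h1, mul_one, Complex.norm_real, Real.norm_eq_abs, abs_of_pos hR]
  have hVne : ∀ x, V x ≠ 0 := by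
    intro x h
    have h2 := hVabs x
    rw [h, norm_zero] at h2
    exact (ne_of_gt hR) h2.symm
  have hVcont : Continuous V := by
    apply continuous_const.mul
    exact Complex.continuous_exp.comp ((Complex.continuous_ofReal.comp (by continuity)).mul
      continuous_const)
  have hVloop : V 1 = V 0 := by
    show (R:ℂ) * Complex.exp ((2*Real.pi*1 : ℝ) * Complex.I)
      = (R:ℂ) * Complex.exp ((2*Real.pi*0 : ℝ) * Complex.I)
    have h1 : ((2*Real.pi*1 : ℝ) : ℂ) * Complex.I = 2 * (Real.pi:ℂ) * Complex.I := by
      push_cast; ring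
    have h0 : ((2*Real.pi*0 : ℝ) : ℂ) * Complex.I = 0 := by push_cast; ring
    rw [h1, h0, Complex.exp_two_pi_mul_I, Complex.exp_zero]
  set H : ℝ → ℝ → ℂ := fun s x => if s ≤ 1/2 then T (((2*s : ℝ):ℂ) * V x) else
      ((2-2*s : ℝ):ℂ) * T (V x) + ((2*s-1 : ℝ):ℂ) * ((starRingEnd ℂ) e * V x) with hH
  have hHcont : Continuous fun p : ℝ × ℝ => H p.1 p.2 := by
    rw [hH]
    apply Continuous.if_le
    · exact hT.comp ((Complex.continuous_ofReal.comp (by continuity)).mul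
        (hVcont.comp continuous_snd))
    · apply Continuous.add
      · exact ((Complex.continuous_ofReal.comp (by continuity)).mul
          (hT.comp (hVcont.comp continuous_snd)))
      · exact ((Complex.continuous_ofReal.comp (by continuity)).mul
          (continuous_const.mul (hVcont.comp continuous_snd)))
    · exact continuous_fst
    · exact continuous_const
    · intro p hp
      rw [hp]
      norm_num
  have hHnz : ∀ s ∈ Icc (0:ℝ) 1, ∀ x ∈ Icc (0:ℝ) 1, H s x ≠ 0 := by
    intro s hs x _
    rw [hH]
    by_cases hhalf : s ≤ 1/2
    · simp only [if_pos hhalf]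
      apply hcon
      rw [norm_mul, hVabs]
      have h2s : (0:ℝ) ≤ 2*s := by linarith [hs.1]
      rw [Complex.norm_real, Real.norm_eq_abs, _root_.abs_of_nonneg h2s]
      nlinarith
    · simp only [if_neg hhalf]
      push_neg at hhalf
      intro heq
      have hre : 0 < (e * (starRingEnd ℂ) (V x) *
          (((2-2*s : ℝ):ℂ) * T (V x) + ((2*s-1 : ℝ):ℂ) * ((starRingEnd ℂ) e * V x))).re := by
        rw [mul_add]
        rw [Complex.add_re]
        have hterm1 : (e * (starRingEnd ℂ) (V x) * (((2-2*s : ℝ):ℂ) * T (V x))).re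
            = (2-2*s) * (e * (starRingEnd ℂ) (V x) * T (V x)).re := by
          rw [show e * (starRingEnd ℂ) (V x) * (((2-2*s : ℝ):ℂ) * T (V x))
              = ((2-2*s : ℝ):ℂ) * (e * (starRingEnd ℂ) (V x) * T (V x)) by ring]
          exact Complex.re_ofReal_mul _ _
        have hterm2 : (e * (starRingEnd ℂ) (V x) * (((2*s-1 : ℝ):ℂ) * ((starRingEnd ℂ) e * V x))).re
            = (2*s-1) * (Complex.normSq e * Complex.normSq (V x)) := by
          rw [show e * (starRingEnd ℂ) (V x) * (((2*s-1 : ℝ):ℂ) * ((starRingEnd ℂ) e * V x))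
              = ((2*s-1 : ℝ):ℂ) * ((e * (starRingEnd ℂ) e) * ((starRingEnd ℂ) (V x) * V x))
              by ring]
          rw [Complex.mul_conj, show (starRingEnd ℂ) (V x) * V x = V x * (starRingEnd ℂ) (V x)
              by ring, Complex.mul_conj]
          rw [Complex.re_ofReal_mul]
          norm_num
        rw [hterm1, hterm2]
        have hp1 : 0 < (e * (starRingEnd ℂ) (V x) * T (V x)).re := hP (V x) (hVabs x)
        have hn1 : 0 ≤ 2 - 2*s := by linarith [hs.2]
        have hn2 : 0 < 2*s - 1 := by linarith
        have hq1 : 0 < Complex.normSq e := Complex.normSq_pos.mpr he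
        have hq2 : 0 < Complex.normSq (V x) := Complex.normSq_pos.mpr (hVne x)
        nlinarith [mul_nonneg hn1 hp1.le, mul_pos hn2 (mul_pos hq1 hq2)]
      rw [heq, mul_zero] at hre
      simp at hre
  have hHloop : ∀ s ∈ Icc (0:ℝ) 1, H s 1 = H s 0 := by
    intro s _
    rw [hH]
    simp only [hVloop]
  have h0 : H 0 = fun _ => T 0 := by
    funext x
    rw [hH]
    norm_num
  have h1 : H 1 = fun x : ℝ => ((starRingEnd ℂ) e * R) * Complex.exp ((2*Real.pi*x : ℝ) * Complex.I) := by
    funext x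
    rw [hH, hV]
    norm_num
    ring
  have hwind := wind_homotopy hHcont hHnz hHloop
  rw [h0, h1] at hwind
  rw [wind_const (hcon 0 (by simp; linarith)), wind_circle] at hwind
  · have hpi := Real.pi_ne_zero
    have : (2 * (Real.pi:ℂ) * Complex.I) ≠ 0 := by
      simp [Complex.I_ne_zero, Complex.ofReal_ne_zero.mpr hpi]
    exact this hwind
  · apply mul_ne_zero
    · simpa using he
    · simpa using ne_of_gt hR


/-- the angle lemma: if `|cos x| < sin ε` then `x` is within `ε` of `π/2 + πℤ`. -/
lemma near_half_pi {x ε : ℝ} (hε0 : 0 < ε) (hε : ε ≤ Real.pi/2)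
    (h : |Real.cos x| < Real.sin ε) : ∃ q : ℤ, |x - (Real.pi/2 + Real.pi*q)| < ε := by
  have hπ := Real.pi_pos
  obtain ⟨q, hq⟩ : ∃ q : ℤ, q = round ((x - Real.pi/2)/Real.pi) := ⟨_, rfl⟩
  obtain ⟨δ, hδdef⟩ : ∃ δ : ℝ, δ = x - Real.pi/2 - Real.pi*q := ⟨_, rfl⟩
  have hδ2 : |δ| ≤ Real.pi/2 := by
    have h1 : |(x - Real.pi/2)/Real.pi - q| ≤ 1/2 := by rw [hq]; exact abs_sub_round _
    have h2 : (x - Real.pi/2)/Real.pi - q = δ/Real.pi := by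
      rw [hδdef]; field_simp
    rw [h2, abs_div, abs_of_pos hπ, div_le_div_iff₀ (by positivity) (by norm_num)] at h1
    linarith
  have hcos : |Real.cos x| = |Real.sin δ| := by
    have hx : x = (Real.pi/2 + δ) + q * Real.pi := by rw [hδdef]; ring
    rw [hx, Real.cos_add_int_mul_pi]
    have : Real.pi/2 + δ = Real.pi/2 - (-δ) := by ring
    rw [this, Real.cos_pi_div_two_sub, Real.sin_neg]
    rw [abs_mul, abs_neg]
    have h3 : |(-1 : ℝ)^q| = 1 := by
      rcases Int.even_or_odd q with hq2 | hq2
      · rw [hq2.neg_one_zpow]; norm_num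
      · rw [hq2.neg_one_zpow]; norm_num
    rw [h3, one_mul]
  rw [hcos] at h
  have habs : |Real.sin δ| = Real.sin |δ| := by
    rcases le_or_gt 0 δ with hδ0 | hδ0
    · rw [_root_.abs_of_nonneg hδ0, _root_.abs_of_nonneg
        (Real.sin_nonneg_of_nonneg_of_le_pi hδ0 (by linarith [le_abs_self δ]))]
    · have hd2' : -δ ≤ Real.pi := by
        have h5 := hδ2
        rw [_root_.abs_of_neg hδ0] at h5
        linarith
      have h4 : 0 ≤ Real.sin (-δ) := Real.sin_nonneg_of_nonneg_of_le_pi (by linarith) hd2'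
      rw [Real.sin_neg] at h4
      rw [_root_.abs_of_neg hδ0, _root_.abs_of_nonpos (by linarith), Real.sin_neg]
  rw [habs] at h
  have hlt : |δ| < ε := by
    by_contra hcon
    push_neg at hcon
    have : Real.sin ε ≤ Real.sin |δ| := by
      apply Real.strictMonoOn_sin.monotoneOn _ _ hcon
      · constructor <;> nlinarith
      · constructor
        · nlinarith [abs_nonneg δ]
        · exact hδ2
    linarith
  exact ⟨q, by rw [show x - (Real.pi/2 + Real.pi*q) = δ by rw [hδdef]; ring]; exact hlt⟩

/-- the fundamental recursion -/
noncomputable def aseq (e c : ℂ) (g : ℕ → ℝ → ℝ) (v : ℂ) : ℕ → ℂ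
  | 0 => v
  | t+1 => e * aseq e c g v t + c * ((g t (2 * (aseq e c g v t).re) : ℝ) : ℂ)

lemma aseq_cont (e c : ℂ) (g : ℕ → ℝ → ℝ) (hg : ∀ t, Continuous (g t)) (t : ℕ) :
    Continuous (fun v => aseq e c g v t) := by
  induction t with
  | zero => exact continuous_id
  | succ t ih =>
    show Continuous (fun v => e * aseq e c g v t + c * ((g t (2 * (aseq e c g v t).re) : ℝ) : ℂ))
    apply (continuous_const.mul ih).add
    apply continuous_const.mul
    exact Complex.continuous_ofReal.comp ((hg t).comp (continuous_const.mul
      (Complex.continuous_re.comp ih)))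

lemma aseq_bound {e : ℂ} (he : ‖e‖ = 1) (c : ℂ) {g : ℕ → ℝ → ℝ} {K : ℝ}
    (hgK : ∀ t x, |g t x| ≤ K) (v : ℂ) (t : ℕ) :
    ‖aseq e c g v t - e^t * v‖ ≤ t * (‖c‖ * K) := by
  induction t with
  | zero => simp [aseq]
  | succ t ih =>
    have hsplit : aseq e c g v (t+1) - e^(t+1) * v
        = e * (aseq e c g v t - e^t * v)
          + c * ((g t (2 * (aseq e c g v t).re) : ℝ) : ℂ) := by
      show e * aseq e c g v t + c * ((g t (2 * (aseq e c g v t).re) : ℝ) : ℂ) - e^(t+1) * v = _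
      ring
    rw [hsplit]
    apply le_trans (norm_add_le _ _)
    rw [norm_mul, norm_mul, he, one_mul, Complex.norm_real, Real.norm_eq_abs]
    push_cast
    have h1 : ‖c‖ * |g t (2 * (aseq e c g v t).re)| ≤ ‖c‖ * K :=
      mul_le_mul_of_nonneg_left (hgK _ _) (norm_nonneg c)
    linarith

lemma aseq_formula {e : ℂ} (he : e ≠ 0) (c : ℂ) (g : ℕ → ℝ → ℝ) (v : ℂ) (n : ℕ) :
    aseq e c g v n = e^n * (v + c * ∑ t ∈ Finset.range n,
      (e⁻¹)^(t+1) * ((g t (2 * (aseq e c g v t).re) : ℝ) : ℂ)) := by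
  induction n with
  | zero => simp [aseq]
  | succ n ih =>
    show e * aseq e c g v n + c * ((g n (2 * (aseq e c g v n).re) : ℝ) : ℂ) = _
    rw [Finset.sum_range_succ]
    have hpow : e^(n+1) * (e⁻¹)^(n+1) = 1 := by
      rw [← mul_pow, mul_inv_cancel₀ he, one_pow]
    linear_combination e * ih - c * ((g n (2 * (aseq e c g v n).re) : ℝ) : ℂ) * hpow

end

set_option maxHeartbeats 1000000

/-- Theorem 4.1, two-dimensional kernel case: Let `N > 1` be odd,
`|b| < 2`, `c = 1`, `θ = arccos(−b/2)`, and `Nθ = 2πρ` for a positive integer `ρ`.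
Suppose `g` is continuous in `x`, `N`-periodic in `t`, and:
(C1) `|g(t,x)| ≤ K`;
(C2) there are `ẑ` and `J > 0` with `g(t,−x) ≤ −J < 0 < J ≤ g(t,x)` for all `x ≥ ẑ`;
(C3) `N / gcd(ρ, N) ≥ max{3, K/J + 1}`.
Then `y(t+2) + b y(t+1) + y(t) = g(t, y(t))` has an `N`-periodic solution. -/
theorem periodic_solution_dim_two
    (N : ℕ) (hN : 1 < N) (hNodd : Odd N)
    (b : ℝ) (hb : |b| < 2)
    (θ : ℝ) (hθ : θ = Real.arccos (-b / 2))
    (ρ : ℕ) (hρ : 0 < ρ) (hres : (N : ℝ) * θ = 2 * Real.pi * ρ)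
    (g : ℕ → ℝ → ℝ) (hgcont : ∀ t : ℕ, Continuous (g t))
    (hgper : ∀ (t : ℕ) (x : ℝ), g (t + N) x = g t x)
    (K : ℝ) (hK : 0 < K)
    (hC1 : ∀ (t : ℕ) (x : ℝ), |g t x| ≤ K)
    (z J : ℝ) (hJ : 0 < J)
    (hC2 : ∀ x : ℝ, z ≤ x → ∀ t : ℕ, g t (-x) ≤ -J ∧ J ≤ g t x)
    (hC3 : max 3 (K / J + 1) ≤ (N : ℝ) / (Nat.gcd ρ N)) :
    ∃ y : ℕ → ℝ, (∀ t : ℕ, y (t + N) = y t) ∧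
      ∀ t : ℕ, y (t + 2) + b * y (t + 1) + y t = g t (y t) := by
  have hπ := Real.pi_pos
  obtain ⟨hb1, hb2⟩ := abs_lt.mp hb
  have hcosθ : Real.cos θ = -b/2 := by
    rw [hθ]; exact Real.cos_arccos (by linarith) (by linarith)
  have hsinθ : 0 < Real.sin θ := by
    rw [hθ, Real.sin_arccos]
    apply Real.sqrt_pos.mpr
    nlinarith
  -- complex constants
  obtain ⟨e, he_def⟩ : ∃ e : ℂ, e = Complex.exp ((θ:ℝ) * Complex.I) := ⟨_, rfl⟩
  have he0 : e ≠ 0 := he_def ▸ Complex.exp_ne_zero _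
  have he_re : e.re = Real.cos θ := by rw [he_def]; exact Complex.exp_ofReal_mul_I_re θ
  have he_im : e.im = Real.sin θ := by rw [he_def]; exact Complex.exp_ofReal_mul_I_im θ
  have habs : ‖e‖ = 1 := by rw [he_def]; exact Complex.norm_exp_ofReal_mul_I θ
  have hquad : e*e + (b:ℂ)*e + 1 = 0 := by
    apply Complex.ext <;>
      simp only [Complex.add_re, Complex.add_im, Complex.mul_re, Complex.mul_im,
        Complex.one_re, Complex.one_im, Complex.ofReal_re, Complex.ofReal_im,
        Complex.zero_re, Complex.zero_im, he_re, he_im, hcosθ] <;>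
      nlinarith [Real.sin_sq_add_cos_sq θ]
  have heN : e ^ N = 1 := by
    rw [he_def, ← Complex.exp_nat_mul]
    have harg : (N:ℂ) * ((θ:ℝ) * Complex.I) = (ρ:ℕ) * (2 * (Real.pi:ℂ) * Complex.I) := by
      have h1 : ((N:ℝ) * θ ) = 2*Real.pi*ρ := hres
      have h2 : (((N:ℝ) * θ : ℝ) : ℂ) = ((2*Real.pi*ρ : ℝ) : ℂ) := by rw [h1]
      push_cast at h2 ⊢
      linear_combination Complex.I * h2
    rw [harg, Complex.exp_nat_mul, Complex.exp_two_pi_mul_I, one_pow]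
  obtain ⟨c, hc_def⟩ : ∃ c : ℂ, c = ((-(1/(2*Real.sin θ)) : ℝ) : ℂ) * Complex.I := ⟨_, rfl⟩
  have hc_re : c.re = 0 := by
    rw [hc_def, Complex.mul_re]
    simp only [Complex.ofReal_re, Complex.ofReal_im, Complex.I_re, Complex.I_im]
    ring
  have hc_im : c.im = -(1/(2*Real.sin θ)) := by
    rw [hc_def, Complex.mul_im]
    simp only [Complex.ofReal_re, Complex.ofReal_im, Complex.I_re, Complex.I_im]
    ring
  have hec_re : (e*c).re = 1/2 := by
    rw [Complex.mul_re, hc_re, hc_im, he_im]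
    field_simp
    ring
  -- the solution family
  obtain ⟨Y, hY⟩ : ∃ Y : ℂ → ℕ → ℝ, ∀ v t, Y v t = 2 * (aseq e c g v t).re :=
    ⟨_, fun _ _ => rfl⟩
  have hcre : ∀ r : ℝ, (c * (r:ℂ)).re = 0 := by
    intro r; rw [Complex.mul_re, hc_re]; simp
  have hecre : ∀ r : ℝ, (e * c * (r:ℂ)).re = r/2 := by
    intro r; rw [Complex.mul_re, hec_re]; simp; ring
  -- difference equation, for every v
  have heqn : ∀ v t, Y v (t+2) + b * Y v (t+1) + Y v t = g t (Y v t) := by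
    intro v t
    have hA1 : aseq e c g v (t+1) = e * aseq e c g v t
        + c * ((g t (2 * (aseq e c g v t).re) : ℝ) : ℂ) := rfl
    have hA2 : aseq e c g v (t+2) = e * aseq e c g v (t+1)
        + c * ((g (t+1) (2 * (aseq e c g v (t+1)).re) : ℝ) : ℂ) := rfl
    have h1 : (aseq e c g v (t+1)).re = (e * aseq e c g v t).re := by
      rw [hA1, Complex.add_re, hcre, add_zero]
    have h2 : (aseq e c g v (t+2)).re
        = (e * (e * aseq e c g v t)).re + (g t (2 * (aseq e c g v t).re))/2 := by
      rw [hA2, Complex.add_re, hcre, add_zero, hA1, mul_add, Complex.add_re,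
        show e * (c * ((g t (2 * (aseq e c g v t).re) : ℝ) : ℂ))
          = e * c * ((g t (2 * (aseq e c g v t).re) : ℝ) : ℂ) from by ring, hecre]
    have hkey : ((e*e + (b:ℂ)*e + 1) * aseq e c g v t).re = 0 := by
      rw [hquad, zero_mul, Complex.zero_re]
    have hexp : (e*e + (b:ℂ)*e + 1) * aseq e c g v t
        = e * (e * aseq e c g v t) + (b:ℂ) * (e * aseq e c g v t) + aseq e c g v t := by
      ring
    rw [hexp] at hkey
    rw [Complex.add_re, Complex.add_re, Complex.re_ofReal_mul] at hkey
    simp only [hY]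
    rw [h2, h1]
    linarith
  -- periodicity from fixed point
  have hper : ∀ v, aseq e c g v N = v → ∀ t, Y v (t+N) = Y v t := by
    intro v hfix
    have haseq : ∀ t, aseq e c g v (t+N) = aseq e c g v t := by
      intro t
      induction t with
      | zero => rw [Nat.zero_add]; exact hfix
      | succ t ih =>
        have hidx : t + 1 + N = (t + N) + 1 := by omega
        rw [hidx]
        show e * aseq e c g v (t+N) + c * ((g (t+N) (2 * (aseq e c g v (t+N)).re) : ℝ) : ℂ) = _
        rw [ih, hgper]
        rfl
    intro t
    rw [hY, hY, haseq]
  -- the bifurcation map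
  obtain ⟨T, hT⟩ : ∃ T : ℂ → ℂ, ∀ v, T v
      = ∑ t ∈ Finset.range N, (e⁻¹)^(t+1) * ((g t (Y v t) : ℝ) : ℂ) := ⟨_, fun _ => rfl⟩
  have hTzero : ∀ v, T v = 0 → aseq e c g v N = v := by
    intro v hv
    rw [aseq_formula he0 c g v N, heN]
    have h3 := hT v
    simp only [hY] at h3
    rw [hv] at h3
    rw [← h3]
    ring
  have hTcont : Continuous T := by
    have hfun : T = fun v => ∑ t ∈ Finset.range N,
        (e⁻¹)^(t+1) * ((g t (2 * (aseq e c g v t).re) : ℝ) : ℂ) := by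
      funext v
      rw [hT v]
      simp only [hY]
    rw [hfun]
    apply continuous_finset_sum
    intro t _
    apply continuous_const.mul
    apply Complex.continuous_ofReal.comp
    apply (hgcont t).comp
    exact continuous_const.mul (Complex.continuous_re.comp (aseq_cont e c g hgcont t))
  -- pairing identity
  have hre2 : ∀ (w : ℂ) (r : ℝ), ((starRingEnd ℂ) w * (r:ℂ)).re = w.re * r := by
    intro w r
    rw [Complex.mul_re]
    simp
  have hconj : e⁻¹ = (starRingEnd ℂ) e := Complex.inv_eq_conj habs
  have hnormSq : e * (starRingEnd ℂ) e = 1 := by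
    rw [Complex.mul_conj]
    rw [Complex.normSq_eq_norm_sq, habs]
    norm_num
  have hpair : ∀ v, (e * (starRingEnd ℂ) v * T v).re
      = ∑ t ∈ Finset.range N, ((e:ℂ)^t * v).re * g t (Y v t) := by
    intro v
    rw [hT v]
    rw [Finset.mul_sum, Complex.re_sum]
    apply Finset.sum_congr rfl
    intro t _
    have hterm : e * (starRingEnd ℂ) v * ((e⁻¹)^(t+1) * ((g t (Y v t) : ℝ) : ℂ))
        = (starRingEnd ℂ) ((e:ℂ)^t * v) * ((g t (Y v t) : ℝ) : ℂ) := by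
      rw [hconj, map_mul, map_pow]
      rw [show ((starRingEnd ℂ) e)^(t+1) = ((starRingEnd ℂ) e)^t * (starRingEnd ℂ) e
        by ring]
      rw [show e * (starRingEnd ℂ) v * ((starRingEnd ℂ) e ^ t * (starRingEnd ℂ) e
            * ((g t (Y v t) : ℝ) : ℂ))
          = (e * (starRingEnd ℂ) e) * ((starRingEnd ℂ) e ^ t * (starRingEnd ℂ) v
            * ((g t (Y v t) : ℝ) : ℂ)) by ring]
      rw [hnormSq, one_mul]
    rw [hterm, hre2]
  
-- arithmetic constants
  classical
  have hNpos : 0 < N := by omega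
  have hN0 : (0:ℝ) < N := by exact_mod_cast hNpos
  obtain ⟨d, hd⟩ : ∃ d : ℕ, d = Nat.gcd ρ N := ⟨_, rfl⟩
  have hd0 : 0 < d := hd ▸ Nat.gcd_pos_of_pos_left N hρ
  have hdR : (0:ℝ) < d := by exact_mod_cast hd0
  obtain ⟨N', hN'⟩ : ∃ n : ℕ, n = N / d := ⟨_, rfl⟩
  have hdvd : d ∣ N := hd ▸ Nat.gcd_dvd_right ρ N
  have hNfact : N = d * N' := by rw [hN']; exact (Nat.mul_div_cancel' hdvd).symm
  have hN'cast : (N:ℝ)/((Nat.gcd ρ N : ℕ):ℝ) = (N':ℝ) := by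
    rw [← hd, hNfact]
    push_cast
    rw [mul_comm]
    field_simp
  have hN'3 : 3 ≤ N' := by
    have h3 := le_trans (le_max_left 3 (K/J+1)) hC3
    rw [hN'cast] at h3
    exact_mod_cast h3
  have hN'0 : 0 < N' := by omega
  have hN'R : (0:ℝ) < N' := by exact_mod_cast hN'0
  have hN'3R : (3:ℝ) ≤ N' := by exact_mod_cast hN'3
  have hN'odd : Odd N' := by
    rcases Nat.even_or_odd N' with hev | hod
    · exfalso
      have h4 : Even N := hNfact ▸ hev.mul_left d
      exact (Nat.not_even_iff_odd.mpr hNodd) h4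
    · exact hod
  obtain ⟨ρ', hρ'⟩ : ∃ r : ℕ, r = ρ / d := ⟨_, rfl⟩
  have hρfact : ρ = d * ρ' := by
    rw [hρ']; exact (Nat.mul_div_cancel' (hd ▸ Nat.gcd_dvd_left ρ N)).symm
  have hcop : Nat.Coprime ρ' N' := by
    rw [hρ', hN', hd]
    exact Nat.coprime_div_gcd_div_gcd (Nat.gcd_pos_of_pos_left N hρ)
  have hθval : θ = 2*Real.pi*(ρ':ℝ)/(N':ℝ) := by
    have h1 : θ = 2*Real.pi*(ρ:ℝ)/(N:ℝ) := by
      rw [eq_div_iff (ne_of_gt hN0)]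
      linarith [hres]
    rw [h1, hNfact, hρfact]
    push_cast
    rw [div_eq_div_iff (by positivity) (by positivity)]
    ring
  obtain ⟨sν, hs⟩ : ∃ sν : ℝ, sν = Real.sin (Real.pi/(2*(N':ℝ))) := ⟨_, rfl⟩
  have hα0 : 0 < Real.pi/(2*(N':ℝ)) := by positivity
  have hαle : Real.pi/(2*(N':ℝ)) ≤ Real.pi/2 := by
    rw [div_le_div_iff₀ (by positivity) (by norm_num)]
    nlinarith only [hπ, hN'3R, mul_nonneg hπ.le (by linarith only [hN'3R] : (0:ℝ) ≤ 2*(N':ℝ) - 2)]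
  have hs0 : 0 < sν := hs ▸ Real.sin_pos_of_pos_of_lt_pi hα0 (lt_of_le_of_lt hαle (by linarith))
  obtain ⟨D, hD⟩ : ∃ D : ℝ, D = 2*((N:ℝ)*(‖c‖ * K)) := ⟨_, rfl⟩
  have hD0 : 0 ≤ D := by
    rw [hD]
    have := norm_nonneg c
    positivity
  obtain ⟨lam, hlam⟩ : ∃ l : ℝ, l = min (1/2) (((N:ℝ)-(d:ℝ))*J/(2*(d:ℝ)*K)) := ⟨_, rfl⟩
  have hdmul : d*3 ≤ N := by
    rw [hNfact]
    exact Nat.mul_le_mul_left d hN'3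
  have hdltN : d < N := by omega
  have hdNR : (d:ℝ) < N := by exact_mod_cast hdltN
  have hlam0 : 0 < lam := by
    rw [hlam]
    apply lt_min (by norm_num)
    apply div_pos (mul_pos (by linarith) hJ) (by positivity)
  have hlam12 : lam ≤ 1/2 := hlam ▸ min_le_left _ _
  have hlamK : (d:ℝ)*lam*K ≤ ((N:ℝ)-(d:ℝ))*J/2 := by
    have h1 : lam ≤ ((N:ℝ)-(d:ℝ))*J/(2*(d:ℝ)*K) := hlam ▸ min_le_right _ _
    have h2 := mul_le_mul_of_nonneg_left h1 (le_of_lt (mul_pos hdR hK))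
    have h3 : (d:ℝ)*K*(((N:ℝ)-(d:ℝ))*J/(2*(d:ℝ)*K)) = ((N:ℝ)-(d:ℝ))*J/2 := by
      field_simp
    nlinarith only [h2, h3]
  obtain ⟨μ, hμ⟩ : ∃ m : ℝ, m = lam * sν := ⟨_, rfl⟩
  have hμ0 : 0 < μ := hμ ▸ mul_pos hlam0 hs0
  have hμs : μ ≤ sν := by
    rw [hμ]
    nlinarith only [hlam12, hs0, mul_nonneg (by linarith only [hlam12] : (0:ℝ) ≤ 1 - lam) hs0.le]
  obtain ⟨R, hR⟩ : ∃ R : ℝ, R = (D + |z| + 1)/(2*μ) := ⟨_, rfl⟩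
  have hR0 : 0 < R := by
    rw [hR]
    apply div_pos (by linarith [abs_nonneg z]) (by positivity)
  have h2μR : 2*μ*R = D + |z| + 1 := by
    rw [hR]
    field_simp
  -- the key estimate
  have hP : ∀ v : ℂ, ‖v‖ = R → 0 < (e * (starRingEnd ℂ) v * T v).re := by
    intro v hv
    rw [hpair v]
    obtain ⟨p, hp⟩ : ∃ p : ℕ → ℝ, ∀ t, p t = ((e:ℂ)^t * v).re := ⟨_, fun _ => rfl⟩
    have hyb : ∀ t, t ≤ N → |Y v t - 2 * p t| ≤ D := by
      intro t ht
      rw [hY, hp]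
      have h1 := aseq_bound habs c hC1 v t
      have h2 : |(aseq e c g v t - e^t*v).re| ≤ ‖aseq e c g v t - e^t*v‖ :=
        Complex.abs_re_le_norm _
      rw [Complex.sub_re] at h2
      have h4 : (t:ℝ)*(‖c‖*K) ≤ (N:ℝ)*(‖c‖*K) := by
        have hck : (0:ℝ) ≤ ‖c‖ * K := mul_nonneg (norm_nonneg c) hK.le
        have htc : (t:ℝ) ≤ (N:ℝ) := by exact_mod_cast ht
        exact mul_le_mul_of_nonneg_right htc hck
      have h5 : |2 * (aseq e c g v t).re - 2*((e:ℂ)^t*v).re|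
          = 2*|(aseq e c g v t).re - ((e:ℂ)^t*v).re| := by
        rw [show 2 * (aseq e c g v t).re - 2*((e:ℂ)^t*v).re
            = 2*((aseq e c g v t).re - ((e:ℂ)^t*v).re) from by ring]
        rw [abs_mul]
        norm_num
      rw [hD, h5]
      linarith only [h1, h2, h4]
    have hgood : ∀ t, t ≤ N → μ*R ≤ |p t| → |p t| * J ≤ p t * g t (Y v t) := by
      intro t htN hpt
      have hYb := hyb t htN
      rcases abs_le.mp hYb with ⟨hYb1, hYb2⟩
      rcases le_or_gt 0 (p t) with hpos | hneg
      · rw [_root_.abs_of_nonneg hpos] at hpt ⊢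
        have hYz : z ≤ Y v t := by
          have h6 := le_abs_self z
          linarith only [hpt, hYb1, hYb2, h2μR, h6]
        have hJg := (hC2 (Y v t) hYz t).2
        exact mul_le_mul_of_nonneg_left hJg hpos
      · rw [abs_of_neg hneg] at hpt ⊢
        have hx : z ≤ -(Y v t) := by
          have h6 := le_abs_self z
          linarith only [hpt, hYb1, hYb2, h2μR, h6]
        have hgle := (hC2 (-(Y v t)) hx t).1
        rw [neg_neg] at hgle
        have hprod : 0 ≤ (-(p t)) * (-(g t (Y v t) + J)) :=
          mul_nonneg (by linarith only [hneg]) (by linarith only [hgle])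
        nlinarith only [hprod]
    have hbad : ∀ t, t ≤ N → -(μ*R*K) ≤ p t * g t (Y v t) := by
      intro t htN
      rcases le_or_gt (μ*R) (|p t|) with hge | hlt
      · have h7 := hgood t htN hge
        have hμRK : (0:ℝ) ≤ μ*R*K := by positivity
        linarith only [h7, mul_nonneg (abs_nonneg (p t)) hJ.le, hμRK]
      · have h8 : |p t * g t (Y v t)| ≤ |p t| * K := by
          rw [abs_mul]
          exact mul_le_mul_of_nonneg_left (hC1 t _) (abs_nonneg _)
        have h9 := neg_abs_le (p t * g t (Y v t))
        have h10 : |p t| * K ≤ μ*R*K := mul_le_mul_of_nonneg_right hlt.le hK.le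
        linarith only [h8, h9, h10]
    obtain ⟨B, hB⟩ : ∃ B : Finset ℕ, B = (Finset.range N).filter (fun t => |p t| < sν*R) :=
      ⟨_, rfl⟩
    -- counting: B.card ≤ d
    have hvne : v ≠ 0 := by
      intro h0
      rw [h0, norm_zero] at hv
      exact (ne_of_gt hR0) hv.symm
    obtain ⟨φ, hφ⟩ : ∃ φ : ℝ, φ = Complex.arg v := ⟨_, rfl⟩
    have hpcos : ∀ t : ℕ, p t = R * Real.cos (θ*t + φ) := by
      intro t
      rw [hp]
      have h1 : (e:ℂ)^t = Complex.exp ((θ*(t:ℝ) : ℝ) * Complex.I) := by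
        rw [he_def, ← Complex.exp_nat_mul]
        congr 1
        push_cast
        ring
      have h2 : v = (R:ℂ) * Complex.exp ((φ:ℝ) * Complex.I) := by
        rw [hφ, ← hv]
        exact (Complex.norm_mul_exp_arg_mul_I v).symm
      rw [h1]
      nth_rewrite 1 [h2]
      rw [show Complex.exp (((θ*(t:ℝ) : ℝ):ℂ) * Complex.I) * ((R:ℂ) * Complex.exp (((φ:ℝ):ℂ) * Complex.I))
          = (R:ℂ) * Complex.exp (((θ*(t:ℝ) : ℝ):ℂ)*Complex.I + ((φ:ℝ):ℂ)*Complex.I) from by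
        rw [Complex.exp_add]; ring]
      rw [show ((θ*(t:ℝ) : ℝ):ℂ)*Complex.I + ((φ:ℝ):ℂ)*Complex.I
          = ((θ*(t:ℝ) + φ : ℝ):ℂ)*Complex.I from by push_cast; ring]
      rw [Complex.re_ofReal_mul, Complex.exp_ofReal_mul_I_re]
    have hco : ∀ t ∈ B, |Real.cos (θ*t + φ)| < sν := by
      intro t ht
      rw [hB, Finset.mem_filter] at ht
      have h1 := ht.2
      rw [hpcos t, abs_mul, abs_of_pos hR0] at h1
      exact lt_of_mul_lt_mul_left (by linarith) hR0.le
    have hmod : ∀ t₁ ∈ B, ∀ t₂ ∈ B, t₂ ≤ t₁ → t₁ % N' = t₂ % N' := by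
      intro t₁ ht₁ t₂ ht₂ hle
      have hc1 : |Real.cos (θ*t₁ + φ)| < Real.sin (Real.pi/(2*(N':ℝ))) := by
        rw [← hs]; exact hco t₁ ht₁
      have hc2 : |Real.cos (θ*t₂ + φ)| < Real.sin (Real.pi/(2*(N':ℝ))) := by
        rw [← hs]; exact hco t₂ ht₂
      obtain ⟨q₁, hq₁⟩ := near_half_pi hα0 hαle hc1
      obtain ⟨q₂, hq₂⟩ := near_half_pi hα0 hαle hc2
      have hsub : |θ*((t₁:ℝ) - (t₂:ℝ)) - Real.pi*((q₁:ℝ) - (q₂:ℝ))| < Real.pi/(N':ℝ) := by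
        have h3 := abs_sub (θ*(t₁:ℝ) + φ - (Real.pi/2 + Real.pi*(q₁:ℝ)))
          (θ*(t₂:ℝ) + φ - (Real.pi/2 + Real.pi*(q₂:ℝ)))
        have h4 : (θ*(t₁:ℝ) + φ - (Real.pi/2 + Real.pi*(q₁:ℝ)))
            - (θ*(t₂:ℝ) + φ - (Real.pi/2 + Real.pi*(q₂:ℝ)))
            = θ*((t₁:ℝ)-(t₂:ℝ)) - Real.pi*((q₁:ℝ) - (q₂:ℝ)) := by ring
        rw [h4] at h3
        have h5 : Real.pi/(2*(N':ℝ)) + Real.pi/(2*(N':ℝ)) = Real.pi/(N':ℝ) := by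
          field_simp
          ring
        linarith [hq₁, hq₂]
      have hθsub : θ*((t₁:ℝ)-(t₂:ℝ)) - Real.pi*((q₁:ℝ)-(q₂:ℝ))
          = (Real.pi/(N':ℝ)) * (2*(ρ':ℝ)*((t₁:ℝ)-(t₂:ℝ)) - ((q₁:ℝ)-(q₂:ℝ))*(N':ℝ)) := by
        rw [hθval]
        field_simp
      rw [hθsub, abs_mul, abs_of_pos (by positivity : (0:ℝ) < Real.pi/(N':ℝ))] at hsub
      have h6 : |2*(ρ':ℝ)*((t₁:ℝ)-(t₂:ℝ)) - ((q₁:ℝ)-(q₂:ℝ))*(N':ℝ)| < 1 := by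
        have hπN : (0:ℝ) < Real.pi/(N':ℝ) := by positivity
        have h7 : Real.pi/(N':ℝ) * |2*(ρ':ℝ)*((t₁:ℝ)-(t₂:ℝ)) - ((q₁:ℝ)-(q₂:ℝ))*(N':ℝ)|
            < Real.pi/(N':ℝ) * 1 := by rw [mul_one]; exact hsub
        exact lt_of_mul_lt_mul_left h7 hπN.le
      obtain ⟨m, hm⟩ : ∃ m : ℤ, m = 2*(ρ':ℤ)*((t₁:ℤ)-(t₂:ℤ)) - ((q₁:ℤ)-(q₂:ℤ))*(N':ℤ) :=
        ⟨_, rfl⟩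
      have hmcast : ((m:ℤ):ℝ) = 2*(ρ':ℝ)*((t₁:ℝ)-(t₂:ℝ)) - ((q₁:ℝ)-(q₂:ℝ))*(N':ℝ) := by
        rw [hm]; push_cast; ring
      have h8 : |(m:ℝ)| < 1 := by rw [hmcast]; exact h6
      have h9 : m = 0 := by
        rcases abs_lt.mp h8 with ⟨hl, hr⟩
        have hl' : (-1:ℤ) < m := by exact_mod_cast hl
        have hr' : m < 1 := by exact_mod_cast hr
        omega
      rw [h9] at hm
      have hdv : (N':ℤ) ∣ (2*(ρ':ℤ))*((t₁:ℤ)-(t₂:ℤ)) := ⟨(q₁:ℤ)-(q₂:ℤ), by linarith [hm]⟩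
      have hcop2 : IsCoprime ((N':ℤ)) (2*(ρ':ℤ)) := by
        apply IsCoprime.mul_right
        · rw [Int.isCoprime_iff_gcd_eq_one]
          rw [show (2:ℤ) = ((2:ℕ):ℤ) from rfl, Int.gcd_natCast_natCast]
          exact hN'odd.coprime_two_right
        · rw [Int.isCoprime_iff_gcd_eq_one, Int.gcd_natCast_natCast]
          exact Nat.coprime_comm.mp hcop
      have hdvd2 : (N':ℤ) ∣ ((t₁:ℤ) - (t₂:ℤ)) := hcop2.dvd_of_dvd_mul_left hdv
      have hdvd3 : N' ∣ (t₁ - t₂) := by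
        have hc : ((t₁ - t₂ : ℕ) : ℤ) = (t₁:ℤ) - (t₂:ℤ) := by
          push_cast [hle]
          ring
        rw [← hc] at hdvd2
        exact_mod_cast hdvd2
      exact ((Nat.modEq_iff_dvd' hle).mpr hdvd3).symm
    have hcard : B.card ≤ d := by
      have h10 := Finset.card_le_card_of_injOn (fun t => t / N')
        (s := B) (t := Finset.range d) ?_ ?_
      · rwa [Finset.card_range d] at h10
      · intro t ht
        rw [hB, Finset.mem_coe, Finset.mem_filter] at ht
        have htN : t < N := Finset.mem_range.mp ht.1
        rw [Finset.mem_coe, Finset.mem_range]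
        apply Nat.div_lt_of_lt_mul
        have hNf2 : N = N'*d := by rw [hNfact, Nat.mul_comm]
        rw [← hNf2]
        exact htN
      · intro t₁ ht₁ t₂ ht₂ hdiv
        simp only [Finset.mem_coe] at ht₁ ht₂
        have hdiv' : t₁ / N' = t₂ / N' := hdiv
        have hmm : t₁ % N' = t₂ % N' := by
          rcases le_total t₂ t₁ with h | h
          · exact hmod t₁ ht₁ t₂ ht₂ h
          · exact (hmod t₂ ht₂ t₁ ht₁ h).symm
        calc t₁ = N' * (t₁ / N') + t₁ % N' := (Nat.div_add_mod t₁ N').symm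
          _ = N' * (t₂ / N') + t₂ % N' := by rw [hdiv', hmm]
          _ = t₂ := Nat.div_add_mod t₂ N'
    -- the sum estimate
    have hsplit := Finset.sum_filter_add_sum_filter_not (Finset.range N)
      (fun t => |p t| < sν*R) (fun t => p t * g t (Y v t))
    obtain ⟨Bc, hBc⟩ : ∃ Bc : Finset ℕ,
        Bc = (Finset.range N).filter (fun t => ¬ |p t| < sν*R) := ⟨_, rfl⟩
    have hBccard : B.card + Bc.card = N := by
      rw [hB, hBc, Finset.card_filter_add_card_filter_not, Finset.card_range]
    have hsum1 : ∀ t ∈ Bc, sν*R*J ≤ p t * g t (Y v t) := by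
      intro t ht
      rw [hBc, Finset.mem_filter] at ht
      obtain ⟨htr, hnot⟩ := ht
      push_neg at hnot
      have htN : t ≤ N := le_of_lt (Finset.mem_range.mp htr)
      have hμR : μ*R ≤ |p t| :=
        le_trans (mul_le_mul_of_nonneg_right hμs hR0.le) hnot
      have h11 := hgood t htN hμR
      have h12 : sν*R*J ≤ |p t| * J := mul_le_mul_of_nonneg_right hnot hJ.le
      linarith only [h11, h12]
    have hsum2 : ∀ t ∈ B, -(μ*R*K) ≤ p t * g t (Y v t) := by
      intro t ht
      rw [hB, Finset.mem_filter] at ht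
      exact hbad t (le_of_lt (Finset.mem_range.mp ht.1))
    have hS1 : (Bc.card : ℝ) * (sν*R*J) ≤ ∑ t ∈ Bc, p t * g t (Y v t) := by
      have h12 := Finset.card_nsmul_le_sum Bc _ _ hsum1
      rwa [nsmul_eq_mul] at h12
    have hS2 : (B.card : ℝ) * (-(μ*R*K)) ≤ ∑ t ∈ B, p t * g t (Y v t) := by
      have h12 := Finset.card_nsmul_le_sum B _ _ hsum2
      rwa [nsmul_eq_mul] at h12
    have hcards : ((N:ℝ) - (d:ℝ)) ≤ (Bc.card:ℝ) := by
      have h13 : (B.card:ℝ) + (Bc.card:ℝ) = (N:ℝ) := by exact_mod_cast hBccard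
      have h14 : (B.card:ℝ) ≤ (d:ℝ) := by exact_mod_cast hcard
      linarith
    have hpos1 : 0 < ((N:ℝ)-(d:ℝ))*(sν*R*J) - (d:ℝ)*(μ*R*K) := by
      have h15 : ((N:ℝ)-(d:ℝ))*(sν*R*J) - (d:ℝ)*((lam*sν)*R*K)
          = R*sν*(((N:ℝ)-(d:ℝ))*J - (d:ℝ)*lam*K) := by ring
      rw [hμ, h15]
      apply mul_pos (mul_pos hR0 hs0)
      have h16 : 0 < ((N:ℝ)-(d:ℝ))*J := mul_pos (by linarith only [hdNR]) hJ
      linarith only [hlamK, h16]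
    have e1 : ((N:ℝ)-(d:ℝ))*(sν*R*J) ≤ (Bc.card:ℝ)*(sν*R*J) := by
      apply mul_le_mul_of_nonneg_right hcards
      positivity
    have e2 : (B.card:ℝ)*(μ*R*K) ≤ (d:ℝ)*(μ*R*K) := by
      apply mul_le_mul_of_nonneg_right (by exact_mod_cast hcard)
      positivity
    have hfin : ∑ t ∈ B, p t * g t (Y v t) + ∑ t ∈ Bc, p t * g t (Y v t)
        = ∑ t ∈ Finset.range N, p t * g t (Y v t) := by
      rw [hB, hBc]
      exact hsplit
    have hgoal : 0 < ∑ t ∈ Finset.range N, p t * g t (Y v t) := by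
      rw [← hfin]
      linarith only [hS1, hS2, e1, e2, hpos1]
    have hpeq : ∀ t, ((e:ℂ)^t * v).re = p t := fun t => (hp t).symm
    calc (0:ℝ) < ∑ t ∈ Finset.range N, p t * g t (Y v t) := hgoal
      _ = ∑ t ∈ Finset.range N, ((e:ℂ)^t * v).re * g t (Y v t) := by
        apply Finset.sum_congr rfl
        intro t _
        rw [hp t]
  -- conclusion
  obtain ⟨v₀, _, hv₀T⟩ := exists_zero hTcont he0 hR0 hP
  exact ⟨Y v₀, hper v₀ (hTzero v₀ hv₀T), heqn v₀⟩
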